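/- Let n ∈ ℝ³ be a unit vector, U_x = exp(−i(x/2)(n·σ)), d₀ ∈ ℝ and d ∈ ℝ³. Then the group average satisfies (1/2π) ∫₀^{2π} U_x (d₀·I + d·σ) U_x† dx = d₀·I + (d·n)(n·σ). Consequently, this average equals the identity matrix I if and only if d₀ = 1 and d·n = 0; this characterizes which operators P₀ = d₀·I + d·σ generate a covariant POVM for qubit phase estimation. -/

import Mathlib

open Matrix Complex

noncomputable section

/-- The Pauli matrices. -/
def σ1 : Matrix (Fin 2) (Fin 2) ℂ := !![0, 1; 1, 0]
def σ2 : Matrix (Fin 2) (Fin 2) ℂ := !![0, -Complex.I; Complex.I, 0]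
def σ3 : Matrix (Fin 2) (Fin 2) ℂ := !![1, 0; 0, -1]

/-- For `v ∈ ℝ³`, the matrix `v·σ = v₁σ₁ + v₂σ₂ + v₃σ₃`. -/
def pauliDot (v : Fin 3 → ℝ) : Matrix (Fin 2) (Fin 2) ℂ :=
  (v 0 : ℂ) • σ1 + (v 1 : ℂ) • σ2 + (v 2 : ℂ) • σ3

/-- The Euclidean norm on `ℝ³`. -/
def norm3 (v : Fin 3 → ℝ) : ℝ := Real.sqrt (v ⬝ᵥ v)

/-- The rotation unitary `U_x = exp(−i(x/2)(n·σ))`. -/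
def Ux (n : Fin 3 → ℝ) (x : ℝ) : Matrix (Fin 2) (Fin 2) ℂ :=
  NormedSpace.exp ((-(Complex.I * (x / 2 : ℝ))) • pauliDot n)

/-- The (entrywise) group average `(1/2π) ∫₀^{2π} U_x P₀ U_x† dx` of
`P₀ = d₀·I + d·σ`. -/
def groupAverage (n : Fin 3 → ℝ) (d0 : ℝ) (d : Fin 3 → ℝ) (i j : Fin 2) : ℂ :=
  (1 / (2 * Real.pi) : ℂ) *
    ∫ x in (0 : ℝ)..(2 * Real.pi),
      (Ux n x * ((d0 : ℂ) • 1 + pauliDot d) * (Ux n x)ᴴ) i j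

attribute [local instance] Matrix.linftyOpNormedAddCommGroup Matrix.linftyOpNormedRing
  Matrix.linftyOpNormedAlgebra

lemma exp_smul_inv (A : Matrix (Fin 2) (Fin 2) ℂ) (hA : A * A = 1) (t : ℝ) :
    NormedSpace.exp ((-(Complex.I * (t : ℂ))) • A)
      = (Real.cos t : ℂ) • (1 : Matrix (Fin 2) (Fin 2) ℂ)
        + (-(Complex.I * (Real.sin t : ℂ))) • A := by
  rw [NormedSpace.exp_eq_tsum (𝕂 := ℂ)]
  refine HasSum.tsum_eq ?_
  refine HasSum.even_add_odd ?_ ?_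
  · have h := ((Complex.hasSum_cos (t : ℂ)).smul_const
      (1 : Matrix (Fin 2) (Fin 2) ℂ))
    rw [Complex.ofReal_cos]
    convert h using 2 with k
    case e'_3 => rfl
    rw [smul_pow, pow_mul A, pow_two A, hA, one_pow, pow_mul, smul_smul]
    congr 1
    have : (-(Complex.I * (t:ℂ)))^2 = -((t:ℂ)^2) := by
      rw [neg_pow, mul_pow, Complex.I_sq]; ring
    rw [this]
    field_simp
    ring
  · have h := (((Complex.hasSum_sin (t : ℂ)).mul_left (-Complex.I)).smul_const A)
    rw [Complex.ofReal_sin]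
    have he : (-(Complex.I * Complex.sin (t:ℂ))) • A
        = (-Complex.I * Complex.sin (t:ℂ)) • A := by ring_nf
    rw [he]
    convert h using 2 with k
    case e'_3 => rfl
    rw [smul_pow, pow_succ A, pow_mul A, pow_two A, hA, one_pow, one_mul, pow_succ, pow_mul, smul_smul]
    congr 1
    have : (-(Complex.I * (t:ℂ)))^2 = -((t:ℂ)^2) := by
      rw [neg_pow, mul_pow, Complex.I_sq]; ring
    rw [this, show (-((t:ℂ)^2))^k = (-1)^k * (t:ℂ)^(2*k) by rw [neg_pow, pow_mul]]
    field_simp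
    ring

lemma pauli_herm (v : Fin 3 → ℝ) : (pauliDot v)ᴴ = pauliDot v := by
  ext i j
  fin_cases i <;> fin_cases j <;>
    simp [pauliDot, σ1, σ2, σ3, Matrix.conjTranspose_apply]

lemma pauli_sq (n : Fin 3 → ℝ) (hn : (n 0:ℝ)^2 + n 1^2 + n 2^2 = 1) :
    pauliDot n * pauliDot n = 1 := by
  have h : ((n 0:ℂ))^2 + (n 1:ℂ)^2 + (n 2:ℂ)^2 = 1 := by exact_mod_cast hn
  ext i j
  fin_cases i <;> fin_cases j <;>
    simp [pauliDot, σ1, σ2, σ3, Matrix.mul_apply, Fin.sum_univ_two, Matrix.one_apply] <;>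
    first
      | linear_combination h - ((n 1:ℂ))^2 * Complex.I_sq
      | linear_combination h + ((n 1:ℂ))^2 * Complex.I_sq
      | linear_combination (n 1:ℂ)^2 * Complex.I_sq
      | ring

lemma Ux_eq (n : Fin 3 → ℝ) (hn : (n 0:ℝ)^2 + n 1^2 + n 2^2 = 1) (x : ℝ) :
    Ux n x = (Real.cos (x/2) : ℂ) • (1 : Matrix (Fin 2) (Fin 2) ℂ)
      + (-(Complex.I * (Real.sin (x/2) : ℂ))) • pauliDot n :=
  exp_smul_inv _ (pauli_sq n hn) (x/2)

lemma pointwise (n : Fin 3 → ℝ) (hn : (n 0:ℝ)^2 + n 1^2 + n 2^2 = 1)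
    (d0 : ℝ) (d : Fin 3 → ℝ) (x : ℝ) (i j : Fin 2) :
    (Ux n x * ((d0 : ℂ) • 1 + pauliDot d) * (Ux n x)ᴴ) i j
      = ((d0 : ℂ) • (1 : Matrix (Fin 2) (Fin 2) ℂ)
          + ((d ⬝ᵥ n : ℝ) : ℂ) • pauliDot n) i j
        + (Real.cos x : ℂ)
            * ((pauliDot d - ((d ⬝ᵥ n : ℝ) : ℂ) • pauliDot n) i j)
        + (Real.sin x : ℂ)
            * ((pauliDot ![n 1 * d 2 - n 2 * d 1, n 2 * d 0 - n 0 * d 2,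
                n 0 * d 1 - n 1 * d 0]) i j) := by
  have hn' : ((n 0:ℂ))^2 + (n 1:ℂ)^2 + (n 2:ℂ)^2 = 1 := by exact_mod_cast hn
  have hc : ((Real.cos (x/2) : ℂ))^2 + ((Real.sin (x/2) : ℂ))^2 = 1 := by
    exact_mod_cast Real.cos_sq_add_sin_sq (x/2)
  have hcx : (Real.cos x : ℂ)
      = ((Real.cos (x/2) : ℂ))^2 - ((Real.sin (x/2) : ℂ))^2 := by
    have : Real.cos x = Real.cos (x/2)^2 - Real.sin (x/2)^2 := by
      have h := Real.cos_two_mul' (x/2)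
      rwa [show 2 * (x/2) = x by ring] at h
    exact_mod_cast this
  have hsx : (Real.sin x : ℂ)
      = 2 * ((Real.sin (x/2) : ℂ)) * ((Real.cos (x/2) : ℂ)) := by
    have : Real.sin x = 2 * Real.sin (x/2) * Real.cos (x/2) := by
      have h := Real.sin_two_mul (x/2)
      rwa [show 2 * (x/2) = x by ring] at h
    exact_mod_cast this
  rw [Ux_eq n hn, hcx, hsx]
  rw [conjTranspose_add, conjTranspose_smul, conjTranspose_smul, conjTranspose_one,
    pauli_herm]
  have hdn : ((d ⬝ᵥ n : ℝ) : ℂ) = (d 0:ℂ)*(n 0:ℂ) + (d 1:ℂ)*(n 1:ℂ) + (d 2:ℂ)*(n 2:ℂ) := by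
    push_cast [dotProduct, Fin.sum_univ_three]
    ring
  rw [hdn]
  have hI : Complex.I^2 = -1 := Complex.I_sq
  fin_cases i <;> fin_cases j <;>
    simp only [pauliDot, σ1, σ2, σ3, Matrix.mul_apply, Fin.sum_univ_two, Matrix.add_apply,
      Matrix.smul_apply, Matrix.sub_apply, Matrix.one_apply, Matrix.cons_val', Matrix.cons_val_zero,
      Matrix.cons_val_one, Matrix.head_cons, Matrix.cons_val_two, Matrix.tail_cons,
      Matrix.empty_val', Matrix.cons_val_fin_one, Matrix.of_apply, smul_eq_mul, Fin.isValue,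
      Fin.zero_eta, Fin.mk_one, ne_eq, one_ne_zero, zero_ne_one, reduceIte, mul_one, mul_zero,
      add_zero, zero_add, star_add, star_mul', star_one, star_zero, star_neg, RCLike.star_def,
      map_neg, _root_.map_mul, Complex.conj_ofReal, Complex.conj_I, Matrix.conjTranspose_apply,
      Complex.ofReal_mul, Complex.ofReal_sub, Matrix.vecHead, Matrix.vecTail, Function.comp_apply, Matrix.cons_val_succ]
  · linear_combination ((1:ℂ)*(d 2:ℂ) + (1:ℂ)*(n 2:ℂ)^2*(d0:ℂ) + (1:ℂ)*(n 1:ℂ)*(n 2:ℂ)*(d 1:ℂ) + (-1:ℂ)*(n 1:ℂ)^2*(d 2:ℂ) + (1:ℂ)*(n 1:ℂ)^2*(d0:ℂ) + (1:ℂ)*(n 0:ℂ)*(n 2:ℂ)*(d 0:ℂ) + (-1:ℂ)*(n 0:ℂ)^2*(d 2:ℂ) + (1:ℂ)*(n 0:ℂ)^2*(d0:ℂ)) * hc + ((-1:ℂ)*(d 2:ℂ) + (1:ℂ)*(d0:ℂ) + (1:ℂ)*((Real.cos (x/2) : ℂ))^2*(d 2:ℂ) + (-1:ℂ)*((Real.cos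 (x/2) : ℂ))^2*(d0:ℂ)) * hn' + ((-1:ℂ)*((Real.sin (x/2) : ℂ))^2*(n 2:ℂ)^2*(d 2:ℂ) + (-1:ℂ)*((Real.sin (x/2) : ℂ))^2*(n 2:ℂ)^2*(d0:ℂ) + (-2:ℂ)*((Real.sin (x/2) : ℂ))^2*(n 1:ℂ)*(n 2:ℂ)*(d 1:ℂ) + (1:ℂ)*((Real.sin (x/2) : ℂ))^2*(n 1:ℂ)^2*(d 2:ℂ) + (-1:ℂ)*((Real.sin (x/2) : ℂ))^2*(n 1:ℂ)^2*(d0:ℂ) + (-2:ℂ)*((Real.sin (x/2) : ℂ))^2*(n 0:ℂ)*(n 2:ℂ)*(d 0:ℂ) + (1:ℂ)*((Real.sin (x/2) : ℂ))^2*(n 0:ℂ)^2*(d 2:ℂ) + (-1:ℂ)*((Real.sin (x/2) : ℂ))^2*(n 0:ℂ)^2*(d0:ℂ) + (2:ℂ)*((Real.cos (x/2) : ℂ))*((Real.sin (x/2) : ℂ))*(n 1:ℂ)*(d 0:ℂ) + (-2:ℂ)*((Real.cos (x/2) : ℂ))*((Real.sin (x/2) : ℂ))*(n 0:ℂ)*(d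 1:ℂ) + (2:ℂ)*Complex.I^2*((Real.sin (x/2) : ℂ))^2*(n 1:ℂ)*(n 2:ℂ)*(d 1:ℂ) + (-1:ℂ)*Complex.I^2*((Real.sin (x/2) : ℂ))^2*(n 1:ℂ)^2*(d 2:ℂ) + (1:ℂ)*Complex.I^2*((Real.sin (x/2) : ℂ))^2*(n 1:ℂ)^2*(d0:ℂ)) * hI
  · linear_combination ((1:ℂ)*(d 0:ℂ) + (-1:ℂ)*(n 2:ℂ)^2*(d 0:ℂ) + (-1:ℂ)*(n 1:ℂ)^2*(d 0:ℂ) + (1:ℂ)*(n 0:ℂ)*(n 2:ℂ)*(d 2:ℂ) + (1:ℂ)*(n 0:ℂ)*(n 1:ℂ)*(d 1:ℂ) + (-1:ℂ)*Complex.I*(d 1:ℂ) + (1:ℂ)*Complex.I*(n 2:ℂ)^2*(d 1:ℂ) + (-1:ℂ)*Complex.I*(n 1:ℂ)*(n 2:ℂ)*(d 2:ℂ) + (-1:ℂ)*Complex.I*(n 0:ℂ)*(n 1:ℂ)*(d 0:ℂ) + (1:ℂ)*Complex.I*(n 0:ℂ)^2*(d 1:ℂ)) * hc + ((-1:ℂ)*(d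 0:ℂ) + (1:ℂ)*((Real.cos (x/2) : ℂ))^2*(d 0:ℂ) + (1:ℂ)*Complex.I*(d 1:ℂ) + (-1:ℂ)*Complex.I*((Real.cos (x/2) : ℂ))^2*(d 1:ℂ)) * hn' + ((1:ℂ)*((Real.sin (x/2) : ℂ))^2*(n 2:ℂ)^2*(d 0:ℂ) + (1:ℂ)*((Real.sin (x/2) : ℂ))^2*(n 1:ℂ)^2*(d 0:ℂ) + (-2:ℂ)*((Real.sin (x/2) : ℂ))^2*(n 0:ℂ)*(n 2:ℂ)*(d 2:ℂ) + (-2:ℂ)*((Real.sin (x/2) : ℂ))^2*(n 0:ℂ)*(n 1:ℂ)*(d 1:ℂ) + (-1:ℂ)*((Real.sin (x/2) : ℂ))^2*(n 0:ℂ)^2*(d 0:ℂ) + (2:ℂ)*((Real.cos (x/2) : ℂ))*((Real.sin (x/2) : ℂ))*(n 2:ℂ)*(d 1:ℂ) + (-2:ℂ)*((Real.cos (x/2) : ℂ))*((Real.sin (x/2) : ℂ))*(n 1:ℂ)*(d 2:ℂ) + (-1:ℂ)*Complex.I*((Real.sin (x/2) : ℂ))^2*(n 2:ℂ)^2*(d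 1:ℂ) + (2:ℂ)*Complex.I*((Real.sin (x/2) : ℂ))^2*(n 1:ℂ)*(n 2:ℂ)*(d 2:ℂ) + (1:ℂ)*Complex.I*((Real.sin (x/2) : ℂ))^2*(n 1:ℂ)^2*(d 1:ℂ) + (2:ℂ)*Complex.I*((Real.sin (x/2) : ℂ))^2*(n 0:ℂ)*(n 1:ℂ)*(d 0:ℂ) + (-1:ℂ)*Complex.I*((Real.sin (x/2) : ℂ))^2*(n 0:ℂ)^2*(d 1:ℂ) + (-1:ℂ)*Complex.I^2*((Real.sin (x/2) : ℂ))^2*(n 1:ℂ)^2*(d 0:ℂ) + (2:ℂ)*Complex.I^2*((Real.sin (x/2) : ℂ))^2*(n 0:ℂ)*(n 1:ℂ)*(d 1:ℂ) + (-1:ℂ)*Complex.I^3*((Real.sin (x/2) : ℂ))^2*(n 1:ℂ)^2*(d 1:ℂ)) * hI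
  · linear_combination ((1:ℂ)*(d 0:ℂ) + (-1:ℂ)*(n 2:ℂ)^2*(d 0:ℂ) + (-1:ℂ)*(n 1:ℂ)^2*(d 0:ℂ) + (1:ℂ)*(n 0:ℂ)*(n 2:ℂ)*(d 2:ℂ) + (1:ℂ)*(n 0:ℂ)*(n 1:ℂ)*(d 1:ℂ) + (1:ℂ)*Complex.I*(d 1:ℂ) + (-1:ℂ)*Complex.I*(n 2:ℂ)^2*(d 1:ℂ) + (1:ℂ)*Complex.I*(n 1:ℂ)*(n 2:ℂ)*(d 2:ℂ) + (1:ℂ)*Complex.I*(n 0:ℂ)*(n 1:ℂ)*(d 0:ℂ) + (-1:ℂ)*Complex.I*(n 0:ℂ)^2*(d 1:ℂ)) * hc + ((-1:ℂ)*(d 0:ℂ) + (1:ℂ)*((Real.cos (x/2) : ℂ))^2*(d 0:ℂ) + (-1:ℂ)*Complex.I*(d 1:ℂ) + (1:ℂ)*Complex.I*((Real.cos (x/2) : ℂ))^2*(d 1:ℂ)) * hn' + ((1:ℂ)*((Real.sin (x/2) : ℂ))^2*(n 2:ℂ)^2*(d 0:ℂ) + (1:ℂ)*((Real.sin (x/2)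 : ℂ))^2*(n 1:ℂ)^2*(d 0:ℂ) + (-2:ℂ)*((Real.sin (x/2) : ℂ))^2*(n 0:ℂ)*(n 2:ℂ)*(d 2:ℂ) + (-2:ℂ)*((Real.sin (x/2) : ℂ))^2*(n 0:ℂ)*(n 1:ℂ)*(d 1:ℂ) + (-1:ℂ)*((Real.sin (x/2) : ℂ))^2*(n 0:ℂ)^2*(d 0:ℂ) + (2:ℂ)*((Real.cos (x/2) : ℂ))*((Real.sin (x/2) : ℂ))*(n 2:ℂ)*(d 1:ℂ) + (-2:ℂ)*((Real.cos (x/2) : ℂ))*((Real.sin (x/2) : ℂ))*(n 1:ℂ)*(d 2:ℂ) + (1:ℂ)*Complex.I*((Real.sin (x/2) : ℂ))^2*(n 2:ℂ)^2*(d 1:ℂ) + (-2:ℂ)*Complex.I*((Real.sin (x/2) : ℂ))^2*(n 1:ℂ)*(n 2:ℂ)*(d 2:ℂ) + (-1:ℂ)*Complex.I*((Real.sin (x/2) : ℂ))^2*(n 1:ℂ)^2*(d 1:ℂ) + (-2:ℂ)*Complex.I*((Real.sin (x/2) : ℂ))^2*(n 0:ℂ)*(n 1:ℂ)*(d 0:ℂ)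 + (1:ℂ)*Complex.I*((Real.sin (x/2) : ℂ))^2*(n 0:ℂ)^2*(d 1:ℂ) + (-1:ℂ)*Complex.I^2*((Real.sin (x/2) : ℂ))^2*(n 1:ℂ)^2*(d 0:ℂ) + (2:ℂ)*Complex.I^2*((Real.sin (x/2) : ℂ))^2*(n 0:ℂ)*(n 1:ℂ)*(d 1:ℂ) + (1:ℂ)*Complex.I^3*((Real.sin (x/2) : ℂ))^2*(n 1:ℂ)^2*(d 1:ℂ)) * hI
  · linear_combination ((-1:ℂ)*(d 2:ℂ) + (1:ℂ)*(n 2:ℂ)^2*(d0:ℂ) + (-1:ℂ)*(n 1:ℂ)*(n 2:ℂ)*(d 1:ℂ) + (1:ℂ)*(n 1:ℂ)^2*(d 2:ℂ) + (1:ℂ)*(n 1:ℂ)^2*(d0:ℂ) + (-1:ℂ)*(n 0:ℂ)*(n 2:ℂ)*(d 0:ℂ) + (1:ℂ)*(n 0:ℂ)^2*(d 2:ℂ) + (1:ℂ)*(n 0:ℂ)^2*(d0:ℂ)) * hc + ((1:ℂ)*(d 2:ℂ) + (1:ℂ)*(d0:ℂ) + (-1:ℂ)*((Real.cos (x/2)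 : ℂ))^2*(d 2:ℂ) + (-1:ℂ)*((Real.cos (x/2) : ℂ))^2*(d0:ℂ)) * hn' + ((1:ℂ)*((Real.sin (x/2) : ℂ))^2*(n 2:ℂ)^2*(d 2:ℂ) + (-1:ℂ)*((Real.sin (x/2) : ℂ))^2*(n 2:ℂ)^2*(d0:ℂ) + (2:ℂ)*((Real.sin (x/2) : ℂ))^2*(n 1:ℂ)*(n 2:ℂ)*(d 1:ℂ) + (-1:ℂ)*((Real.sin (x/2) : ℂ))^2*(n 1:ℂ)^2*(d 2:ℂ) + (-1:ℂ)*((Real.sin (x/2) : ℂ))^2*(n 1:ℂ)^2*(d0:ℂ) + (2:ℂ)*((Real.sin (x/2) : ℂ))^2*(n 0:ℂ)*(n 2:ℂ)*(d 0:ℂ) + (-1:ℂ)*((Real.sin (x/2) : ℂ))^2*(n 0:ℂ)^2*(d 2:ℂ) + (-1:ℂ)*((Real.sin (x/2) : ℂ))^2*(n 0:ℂ)^2*(d0:ℂ) + (-2:ℂ)*((Real.cos (x/2) : ℂ))*((Real.sin (x/2) : ℂ))*(n 1:ℂ)*(d 0:ℂ) + (2:ℂ)*((Real.cos (x/2) :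 ℂ))*((Real.sin (x/2) : ℂ))*(n 0:ℂ)*(d 1:ℂ) + (-2:ℂ)*Complex.I^2*((Real.sin (x/2) : ℂ))^2*(n 1:ℂ)*(n 2:ℂ)*(d 1:ℂ) + (1:ℂ)*Complex.I^2*((Real.sin (x/2) : ℂ))^2*(n 1:ℂ)^2*(d 2:ℂ) + (1:ℂ)*Complex.I^2*((Real.sin (x/2) : ℂ))^2*(n 1:ℂ)^2*(d0:ℂ)) * hI

lemma integral_entry (n : Fin 3 → ℝ) (hn : (n 0:ℝ)^2 + n 1^2 + n 2^2 = 1)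
    (d0 : ℝ) (d : Fin 3 → ℝ) (i j : Fin 2) :
    (∫ x in (0:ℝ)..(2*Real.pi),
        (Ux n x * ((d0 : ℂ) • 1 + pauliDot d) * (Ux n x)ᴴ) i j)
      = (2*Real.pi : ℂ) * (((d0 : ℂ) • (1 : Matrix (Fin 2) (Fin 2) ℂ)
          + ((d ⬝ᵥ n : ℝ) : ℂ) • pauliDot n) i j) := by
  have hint : ∀ x : ℝ, (Ux n x * ((d0 : ℂ) • 1 + pauliDot d) * (Ux n x)ᴴ) i j
      = ((d0 : ℂ) • (1 : Matrix (Fin 2) (Fin 2) ℂ)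
          + ((d ⬝ᵥ n : ℝ) : ℂ) • pauliDot n) i j
        + (Real.cos x : ℂ)
            * ((pauliDot d - ((d ⬝ᵥ n : ℝ) : ℂ) • pauliDot n) i j)
        + (Real.sin x : ℂ)
            * ((pauliDot ![n 1 * d 2 - n 2 * d 1, n 2 * d 0 - n 0 * d 2,
                n 0 * d 1 - n 1 * d 0]) i j) := fun x => pointwise n hn d0 d x i j
  simp only [hint]
  have i1 : IntervalIntegrable (fun _ : ℝ => ((d0 : ℂ) • (1 : Matrix (Fin 2) (Fin 2) ℂ)
      + ((d ⬝ᵥ n : ℝ) : ℂ) • pauliDot n) i j) MeasureTheory.volume 0 (2*Real.pi) :=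
    intervalIntegrable_const
  have i2 : IntervalIntegrable (fun x : ℝ => (Real.cos x : ℂ)
      * ((pauliDot d - ((d ⬝ᵥ n : ℝ) : ℂ) • pauliDot n) i j)) MeasureTheory.volume 0 (2*Real.pi) :=
    (((Complex.continuous_ofReal.comp Real.continuous_cos).mul
      continuous_const).intervalIntegrable _ _)
  have i3 : IntervalIntegrable (fun x : ℝ => (Real.sin x : ℂ)
      * ((pauliDot ![n 1 * d 2 - n 2 * d 1, n 2 * d 0 - n 0 * d 2,
          n 0 * d 1 - n 1 * d 0]) i j)) MeasureTheory.volume 0 (2*Real.pi) :=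
    (((Complex.continuous_ofReal.comp Real.continuous_sin).mul
      continuous_const).intervalIntegrable _ _)
  rw [intervalIntegral.integral_add (i1.add i2) i3, intervalIntegral.integral_add i1 i2,
    intervalIntegral.integral_const, intervalIntegral.integral_mul_const,
    intervalIntegral.integral_mul_const, intervalIntegral.integral_ofReal,
    intervalIntegral.integral_ofReal, integral_cos, integral_sin,
    Real.sin_two_pi, Real.cos_two_pi, Real.sin_zero, Real.cos_zero]
  rw [Complex.real_smul]
  push_cast
  ring

/-- the group average of `P₀ = d₀·I + d·σ` equals `d₀·I + (d·n)(n·σ)`;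
consequently it equals the identity iff `d₀ = 1` and `d·n = 0`. -/
theorem group_average_covariant_characterization
    (n : Fin 3 → ℝ) (hn : norm3 n = 1) (d0 : ℝ) (d : Fin 3 → ℝ) :
    (∀ i j, groupAverage n d0 d i j
        = ((d0 : ℂ) • (1 : Matrix (Fin 2) (Fin 2) ℂ)
            + ((d ⬝ᵥ n : ℝ) : ℂ) • pauliDot n) i j)
    ∧ ((∀ i j, groupAverage n d0 d i j = (1 : Matrix (Fin 2) (Fin 2) ℂ) i j)
        ↔ d0 = 1 ∧ d ⬝ᵥ n = 0) := by
  have hq : n ⬝ᵥ n = n 0^2 + n 1^2 + n 2^2 := by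
    simp [dotProduct, Fin.sum_univ_three]; ring
  have hb : (n 0:ℝ)^2 + n 1^2 + n 2^2 = 1 := by
    rw [← hq]
    exact Real.sqrt_eq_one.mp hn
  have hπ : (Real.pi : ℂ) ≠ 0 := by
    exact_mod_cast Real.pi_ne_zero
  have part1 : ∀ i j, groupAverage n d0 d i j
      = ((d0 : ℂ) • (1 : Matrix (Fin 2) (Fin 2) ℂ)
          + ((d ⬝ᵥ n : ℝ) : ℂ) • pauliDot n) i j := by
    intro i j
    rw [groupAverage, integral_entry n hb d0 d i j]
    field_simp
  refine ⟨part1, ?_, ?_⟩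
  · intro h
    have hM : ∀ i j, ((d0 : ℂ) • (1 : Matrix (Fin 2) (Fin 2) ℂ)
        + ((d ⬝ᵥ n : ℝ) : ℂ) • pauliDot n) i j = (1 : Matrix (Fin 2) (Fin 2) ℂ) i j :=
      fun i j => (part1 i j) ▸ h i j
    have h00 := hM 0 0
    have h01 := hM 0 1
    have h10 := hM 1 0
    have h11 := hM 1 1
    simp [pauliDot, σ1, σ2, σ3, Matrix.one_apply, -mul_eq_zero] at h00 h01 h10 h11
    have hdn : ((d ⬝ᵥ n : ℝ) : ℂ)
        = (d 0:ℂ)*(n 0:ℂ) + (d 1:ℂ)*(n 1:ℂ) + (d 2:ℂ)*(n 2:ℂ) := by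
      push_cast [dotProduct, Fin.sum_univ_three]
      ring
    have hd0 : (d0 : ℂ) = 1 := by linear_combination h00/2 + h11/2
    have ha : ((d ⬝ᵥ n) * n 0 : ℝ) = 0 := by
      have : ((d ⬝ᵥ n : ℝ) : ℂ) * (n 0 : ℂ) = 0 := by
        rw [hdn] at h01 h10 ⊢; linear_combination h01/2 + h10/2
      exact_mod_cast this
    have hbb : ((d ⬝ᵥ n) * n 1 : ℝ) = 0 := by
      have : ((d ⬝ᵥ n : ℝ) : ℂ) * (n 1 : ℂ) = 0 := by
        rw [hdn] at h01 h10 ⊢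
        linear_combination (-(Complex.I)/2) * (h10 - h01)
          + (((d 0:ℂ)*(n 0:ℂ) + (d 1:ℂ)*(n 1:ℂ) + (d 2:ℂ)*(n 2:ℂ)) * (n 1 : ℂ)) * Complex.I_sq
      exact_mod_cast this
    have hcc : ((d ⬝ᵥ n) * n 2 : ℝ) = 0 := by
      have : ((d ⬝ᵥ n : ℝ) : ℂ) * (n 2 : ℂ) = 0 := by
        rw [hdn] at h00 h11 ⊢; linear_combination h00/2 - h11/2
      exact_mod_cast this
    constructor
    · exact_mod_cast hd0
    · linear_combination (-(d ⬝ᵥ n : ℝ)) * hb + n 0 * ha + n 1 * hbb + n 2 * hcc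
  · rintro ⟨h1, h2⟩ i j
    rw [part1 i j, h1, h2]
    simp

end
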